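/- In the well-mixed closed system with Langmuir kinetics, the pair (c(t), m(t)) with A c' = -S f(c,m), m' = f(c,m), f(c,m) = k_a c (1 - m/m_∞) - k_d m, c(0) = c₀ > 0, m(0) = 0, satisfies c(t) ≥ 0 and 0 ≤ m(t) ≤ min(m_∞, A c₀/S) for all t ≥ 0. -/

import Mathlib

open Set Filter Topology

/-- Barrier lemma: if whenever `u` hits `M` its derivative is strictly negative,
then `u` stays `≤ M` on `[0, ∞)`. -/
lemma barrier_le (u d : ℝ → ℝ) (M : ℝ)
    (hd : ∀ t, 0 ≤ t → HasDerivAt u (d t) t)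
    (h0 : u 0 ≤ M)
    (hb : ∀ t, 0 ≤ t → u t = M → d t < 0) :
    ∀ t, 0 ≤ t → u t ≤ M := by
  intro t ht
  by_contra h
  push_neg at h
  have hcont : ContinuousOn u (Icc 0 t) := fun v hv =>
    ((hd v hv.1).continuousAt).continuousWithinAt
  set K : Set ℝ := {v ∈ Icc 0 t | u v ≤ M} with hKdef
  have hKclosed : IsClosed K := by
    have : K = Icc 0 t ∩ u ⁻¹' (Iic M) := by
      ext v; simp [hKdef, and_comm]
    rw [this]
    exact ContinuousOn.preimage_isClosed_of_isClosed hcont isClosed_Icc isClosed_Iic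
  have hK0 : (0 : ℝ) ∈ K := ⟨⟨le_refl 0, ht⟩, h0⟩
  have hKne : K.Nonempty := ⟨0, hK0⟩
  have hKbdd : BddAbove K := ⟨t, fun v hv => hv.1.2⟩
  set s := sSup K with hsdef
  have hsmem : s ∈ K := hKclosed.csSup_mem hKne hKbdd
  have hs0 : 0 ≤ s := hsmem.1.1
  have hst : s ≤ t := hsmem.1.2
  have hslt : s < t := by
    rcases lt_or_eq_of_le hst with h' | h'
    · exact h'
    · exact absurd (h' ▸ hsmem.2) (not_le.mpr h)
  have hgt : ∀ v ∈ Ioc s t, M < u v := by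
    intro v hv
    by_contra hle
    push_neg at hle
    have : v ∈ K := ⟨⟨hs0.trans hv.1.le, hv.2⟩, hle⟩
    exact absurd (le_csSup hKbdd this) (not_le.mpr hv.1)
  -- the filter of points just to the right of s inside Ioc s t
  have hNeBot : (𝓝[Ioc s t] s).NeBot := by
    rw [← mem_closure_iff_nhdsWithin_neBot, closure_Ioc hslt.ne]
    exact ⟨le_refl s, hslt.le⟩
  have hsub : Ioc s t ⊆ Icc 0 t := fun v hv => ⟨hs0.trans hv.1.le, hv.2⟩
  have htend : Tendsto u (𝓝[Ioc s t] s) (𝓝 (u s)) :=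
    ((hcont s ⟨hs0, hst⟩).mono hsub).tendsto
  have husM : u s = M := by
    refine le_antisymm hsmem.2 ?_
    exact ge_of_tendsto htend (eventually_of_mem self_mem_nhdsWithin
      fun v hv => (hgt v hv).le)
  have hneg : d s < 0 := hb s hs0 husM
  -- but slopes to the right are positive, so d s ≥ 0
  have hder : HasDerivWithinAt u (d s) (Ioc s t) s := (hd s hs0).hasDerivWithinAt
  have hslope : Tendsto (slope u s) (𝓝[(Ioc s t) \ {s}] s) (𝓝 (d s)) :=
    hasDerivWithinAt_iff_tendsto_slope.mp hder
  have hdiff : (Ioc s t) \ {s} = Ioc s t := by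
    ext v; simp only [mem_diff, mem_singleton_iff, mem_Ioc, and_iff_left_iff_imp]
    rintro ⟨h1, _⟩; exact h1.ne'
  rw [hdiff] at hslope
  have : 0 ≤ d s := by
    refine ge_of_tendsto hslope (eventually_of_mem self_mem_nhdsWithin fun v hv => ?_)
    have h1 : 0 < v - s := sub_pos.mpr hv.1
    have h2 : 0 < u v - u s := by rw [husM]; exact sub_pos.mpr (hgt v hv)
    rw [slope_def_field]
    exact (div_pos h2 h1).le
  exact absurd hneg (not_lt.mpr this)

theorem closed_system_langmuir_bounds (A S k_a k_d m_inf c0 : ℝ)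
    (hA : 0 < A) (hS : 0 < S) (hka : 0 < k_a) (hkd : 0 < k_d)
    (hm : 0 < m_inf) (hc0 : 0 < c0)
    (f : ℝ → ℝ → ℝ)
    (hf : ∀ x y, f x y = k_a * x * (1 - y / m_inf) - k_d * y)
    (c m : ℝ → ℝ)
    (hc : ∀ t, 0 ≤ t → HasDerivAt c (-(S / A) * f (c t) (m t)) t)
    (hm' : ∀ t, 0 ≤ t → HasDerivAt m (f (c t) (m t)) t)
    (hinit_c : c 0 = c0) (hinit_m : m 0 = 0) :
    ∀ t, 0 ≤ t → 0 ≤ c t ∧ 0 ≤ m t ∧ m t ≤ min m_inf (A * c0 / S) := by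
  have hAne : A ≠ 0 := hA.ne'
  -- conservation law: A c + S m = A c0
  have hcons : ∀ t, 0 ≤ t → A * c t + S * m t = A * c0 := by
    intro t ht
    have key := constant_of_has_deriv_right_zero
      (f := fun v => A * c v + S * m v) (a := 0) (b := t)
      (fun v hv => (((hc v hv.1).const_mul A).add ((hm' v hv.1).const_mul S)).continuousAt.continuousWithinAt)
      (fun v hv => by
        have h1 : HasDerivAt (fun v => A * c v + S * m v)
            (A * (-(S / A) * f (c v) (m v)) + S * f (c v) (m v)) v :=
          ((hc v hv.1).const_mul A).add ((hm' v hv.1).const_mul S)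
        have h2 : A * (-(S / A) * f (c v) (m v)) + S * f (c v) (m v) = 0 := by
          field_simp
          ring
        exact (h2 ▸ h1).hasDerivWithinAt)
    have := key t ⟨ht, le_refl t⟩
    simpa [hinit_c, hinit_m] using this
  have hceq : ∀ t, 0 ≤ t → c t = c0 - (S / A) * m t := by
    intro t ht
    have h := hcons t ht
    field_simp
    linarith
  set M := min m_inf (A * c0 / S) with hM
  have hMpos : 0 < M := lt_min hm (by positivity)
  -- lower bound: m ≥ 0, via barrier for -m
  have hlow : ∀ t, 0 ≤ t → 0 ≤ m t := by
    have := barrier_le (fun t => - m t) (fun t => - f (c t) (m t)) 0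
      (fun t ht => (hm' t ht).neg)
      (by simp [hinit_m])
      (fun t ht hmt => by
        have hmt0 : m t = 0 := by simpa using hmt
        have hct : c t = c0 := by rw [hceq t ht, hmt0]; ring
        show -f (c t) (m t) < 0
        rw [hf, hmt0, hct]
        simp only [zero_div, sub_zero, mul_zero]
        nlinarith)
    intro t ht
    have h := this t ht
    linarith
  -- upper bound: m ≤ M
  have hup : ∀ t, 0 ≤ t → m t ≤ M := by
    apply barrier_le m (fun t => f (c t) (m t)) M
      (fun t ht => hm' t ht)
      (by rw [hinit_m]; exact hMpos.le)
    intro t ht hmt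
    have hct : c t = c0 - (S / A) * M := by rw [hceq t ht, hmt]
    rw [hf, hct, hmt]
    rcases min_cases m_inf (A * c0 / S) with ⟨hmin, hle⟩ | ⟨hmin, hle⟩
    · -- M = m_inf
      rw [← hM] at hmin
      rw [hmin]
      have : (1 : ℝ) - m_inf / m_inf = 0 := by field_simp; ring
      rw [this]
      nlinarith
    · -- M = A c0 / S
      rw [← hM] at hmin
      rw [hmin]
      have : c0 - S / A * (A * c0 / S) = 0 := by field_simp; ring
      rw [this]
      nlinarith [hMpos, hmin ▸ hMpos]
  intro t ht
  refine ⟨?_, hlow t ht, hup t ht⟩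
  have h1 : m t ≤ A * c0 / S := (hup t ht).trans (min_le_right _ _)
  rw [hceq t ht]
  have : S / A * m t ≤ S / A * (A * c0 / S) := by
    apply mul_le_mul_of_nonneg_left h1 (by positivity)
  have h2 : S / A * (A * c0 / S) = c0 := by field_simp
  linarith [h2 ▸ this]
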